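/- Let ξ₁ ∈ ℝ^p with ‖ξ₁‖₂ = 1 and at most s nonzero coordinates. For any unit vector β ∈ ℝ^p with h = β - ξ₁, δ = 1 - ξ₁⊤β ≥ 0, and ω = ‖β‖₁ - ‖ξ₁‖₁, one has ‖h‖₁ ≤ 2√(2sδ) + ω. -/
import Mathlib

open Finset Real Matrix

/-- Proposition 4: for an `s`-sparse unit vector `ξ₁` and any unit vector `β` with
`h = β - ξ₁`, `δ = 1 - ξ₁⊤β ≥ 0`, `ω = ‖β‖₁ - ‖ξ₁‖₁`, one has `‖h‖₁ ≤ 2√(2sδ) + ω`. -/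
theorem l1_error_bound {p s : ℕ} (ξ β : Fin p → ℝ)
    (hξu : ∑ i, (ξ i) ^ 2 = 1)
    (hξsp : (Finset.univ.filter (fun i => ξ i ≠ 0)).card ≤ s)
    (hβu : ∑ i, (β i) ^ 2 = 1)
    (hδ : 0 ≤ 1 - ξ ⬝ᵥ β) :
    (∑ i, |β i - ξ i|) ≤
      2 * Real.sqrt (2 * s * (1 - ξ ⬝ᵥ β)) + ((∑ i, |β i|) - ∑ i, |ξ i|) := by
  set S := Finset.univ.filter (fun i => ξ i ≠ 0) with hS
  set h : Fin p → ℝ := fun i => β i - ξ i with hh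
  set δ := 1 - ξ ⬝ᵥ β with hδdef
  -- ℓ₂ norm of h
  have hnorm : ∑ i, (h i) ^ 2 = 2 * δ := by
    have : ∀ i, (h i) ^ 2 = β i ^ 2 + ξ i ^ 2 - 2 * (ξ i * β i) := by
      intro i; simp only [hh]; ring
    simp only [this, Finset.sum_sub_distrib, Finset.sum_add_distrib, hβu, hξu,
      ← Finset.mul_sum]
    simp [hδdef, dotProduct]
    ring
  -- Cauchy–Schwarz on S
  have hCS : (∑ i ∈ S, |h i|) ^ 2 ≤ S.card * ∑ i ∈ S, (h i) ^ 2 := by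
    have := sq_sum_le_card_mul_sum_sq (s := S) (f := fun i => |h i|)
    simpa [sq_abs] using this
  have hsumSsq : ∑ i ∈ S, (h i) ^ 2 ≤ 2 * δ := by
    rw [← hnorm]
    exact Finset.sum_le_sum_of_subset_of_nonneg (Finset.subset_univ S)
      (fun i _ _ => sq_nonneg _)
  have hSle : (∑ i ∈ S, |h i|) ≤ Real.sqrt (2 * s * δ) := by
    have h1 : (∑ i ∈ S, |h i|) ^ 2 ≤ 2 * s * δ := by
      calc (∑ i ∈ S, |h i|) ^ 2 ≤ S.card * ∑ i ∈ S, (h i) ^ 2 := hCS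
        _ ≤ s * (2 * δ) := by
            apply mul_le_mul (by exact_mod_cast hξsp) hsumSsq
              (Finset.sum_nonneg fun i _ => sq_nonneg _) (Nat.cast_nonneg s)
        _ = 2 * s * δ := by ring
    calc (∑ i ∈ S, |h i|) = Real.sqrt ((∑ i ∈ S, |h i|) ^ 2) := by
          rw [Real.sqrt_sq (Finset.sum_nonneg fun i _ => abs_nonneg _)]
      _ ≤ Real.sqrt (2 * s * δ) := Real.sqrt_le_sqrt h1
  -- split sums over S and Sᶜ
  have hsplit : ∀ f : Fin p → ℝ, ∑ i, f i = ∑ i ∈ S, f i + ∑ i ∈ Sᶜ, f i := by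
    intro f; rw [add_comm, Finset.sum_compl_add_sum]
  have hoffS : ∀ i ∈ Sᶜ, ξ i = 0 := by
    intro i hi
    simp [hS, Finset.mem_compl, Finset.mem_filter] at hi
    exact hi
  have hcompl : ∑ i ∈ Sᶜ, |h i| = ∑ i ∈ Sᶜ, |β i| := by
    apply Finset.sum_congr rfl
    intro i hi; rw [hh]; simp [hoffS i hi]
  have hξcompl : ∑ i ∈ Sᶜ, |ξ i| = 0 := by
    apply Finset.sum_eq_zero; intro i hi; simp [hoffS i hi]
  -- key ω bound: ∑_{Sᶜ}|β| ≤ ω + ∑_S |h|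
  have hω : ∑ i ∈ Sᶜ, |β i| ≤ ((∑ i, |β i|) - ∑ i, |ξ i|) + ∑ i ∈ S, |h i| := by
    have h1 : ∑ i ∈ S, |ξ i| ≤ ∑ i ∈ S, |β i| + ∑ i ∈ S, |h i| := by
      rw [← Finset.sum_add_distrib]
      apply Finset.sum_le_sum
      intro i _
      calc |ξ i| = |β i - h i| := by rw [hh]; ring_nf
        _ ≤ |β i| + |h i| := abs_sub _ _
    rw [hsplit (fun i => |β i|), hsplit (fun i => |ξ i|), hξcompl]
    linarith
  calc ∑ i, |h i| = ∑ i ∈ S, |h i| + ∑ i ∈ Sᶜ, |h i| := hsplit _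
    _ = ∑ i ∈ S, |h i| + ∑ i ∈ Sᶜ, |β i| := by rw [hcompl]
    _ ≤ Real.sqrt (2 * s * δ) + (((∑ i, |β i|) - ∑ i, |ξ i|) + Real.sqrt (2 * s * δ)) := by
        have := le_trans hω (by linarith [hSle] : ((∑ i, |β i|) - ∑ i, |ξ i|) + ∑ i ∈ S, |h i| ≤ ((∑ i, |β i|) - ∑ i, |ξ i|) + Real.sqrt (2 * s * δ))
        exact add_le_add hSle this
    _ = 2 * Real.sqrt (2 * s * δ) + ((∑ i, |β i|) - ∑ i, |ξ i|) := by ring
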